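/- Let q ∈ Δ₄ and φ ∈ ℝ, and set θ = π/4. Then the sum of the absolute values of the negative eigenvalues of M(q, π/4, φ) (counted with multiplicity) equals max(0, ½[√((q₁ − q₄)² + (q₂ − q₃)²) − (q₁ + q₄)]). Moreover (q₁ − q₄)² + (q₂ − q₃)² = (q₁ + q₄)² − f(q), so this negativity equals max(0, ½[√((q₁ + q₄)² − f(q)) − (q₁ + q₄)]) and is positive exactly when f(q) < 0. -/

import Mathlib

open Finset
open scoped ComplexOrder

/-- The probability simplex Δ₄ ⊂ ℝ⁴. -/
def inSimplex (p : Fin 4 → ℝ) : Prop := (∀ i, 0 ≤ p i) ∧ ∑ i, p i = 1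

/-- The entanglement witness f(q) = 4 q₁ q₄ − (q₂ − q₃)². -/
noncomputable def fwit (q : Fin 4 → ℝ) : ℝ := 4 * q 0 * q 3 - (q 1 - q 2) ^ 2

/-- The partial transpose M(q,θ,φ) of the rotated two-qubit state:
M₁₁ = q₁, M₂₂ = q₂cos²θ + q₃sin²θ, M₃₃ = q₂sin²θ + q₃cos²θ, M₄₄ = q₄,
M₁₄ = ((q₃−q₂)/2)·sin(2θ)·e^{iφ}, M₄₁ = conj(M₁₄), all other entries zero. -/
noncomputable def Mmat (q : Fin 4 → ℝ) (θ φ : ℝ) : Matrix (Fin 4) (Fin 4) ℂ :=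
  !![(q 0 : ℂ), 0, 0, (((q 2 - q 1) / 2 * Real.sin (2 * θ) : ℝ) : ℂ) * Complex.exp (Complex.I * φ);
     0, ((q 1 * Real.cos θ ^ 2 + q 2 * Real.sin θ ^ 2 : ℝ) : ℂ), 0, 0;
     0, 0, ((q 1 * Real.sin θ ^ 2 + q 2 * Real.cos θ ^ 2 : ℝ) : ℂ), 0;
     (((q 2 - q 1) / 2 * Real.sin (2 * θ) : ℝ) : ℂ) * Complex.exp (-(Complex.I * φ)), 0, 0,
       (q 3 : ℂ)]

open Polynomial Matrix


lemma charpoly_conj_aux {n R : Type*} [Fintype n] [DecidableEq n] [CommRing R]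
    (U D V : Matrix n n R) (hUV : U * V = 1) (hVU : V * U = 1) :
    (U * D * V).charpoly = D.charpoly := by
  have hm : (charmatrix (U * D * V)) =
      U.map C * charmatrix D * V.map C := by
    have : (U * D * V).map (C : R →+* R[X]) = U.map C * D.map C * V.map C := by
      simp [Matrix.map_mul]
    rw [charmatrix, charmatrix]
    simp only [RingHom.mapMatrix_apply]
    rw [this]
    have hsc : U.map (C : R →+* R[X]) * Matrix.scalar n (X : R[X]) * V.map C
        = Matrix.scalar n (X : R[X]) := by
      rw [Matrix.scalar_apply, ← Matrix.smul_one_eq_diagonal, Matrix.mul_smul, Matrix.mul_one,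
        Matrix.smul_mul, ← Matrix.map_mul, hUV]
      simp [Matrix.smul_one_eq_diagonal]
    rw [Matrix.mul_sub, Matrix.sub_mul, hsc]
  rw [Matrix.charpoly, Matrix.charpoly, hm, det_mul, det_mul]
  have : (U.map (C : R →+* R[X])).det * (V.map C).det = 1 := by
    rw [← det_mul, ← Matrix.map_mul, hUV]; simp
  have h2 : (V.map (C : R →+* R[X])).det * (U.map C).det = 1 := by
    rw [← det_mul, ← Matrix.map_mul, hVU]; simp
  rw [mul_right_comm, this, one_mul]

lemma charmatrix_diagonal {n R : Type*} [Fintype n] [DecidableEq n] [CommRing R]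
    (d : n → R) : charmatrix (diagonal d) = diagonal (fun i => X - C (d i)) := by
  ext i j
  by_cases h : i = j <;> simp [h, charmatrix_apply, diagonal]

lemma herm_charpoly {n : Type*} [Fintype n] [DecidableEq n]
    {A : Matrix n n ℂ} (hA : A.IsHermitian) :
    A.charpoly = ∏ i, (X - C (hA.eigenvalues i : ℂ)) := by
  have h := hA.spectral_theorem
  have hU := (Matrix.mem_unitaryGroup_iff).mp (hA.eigenvectorUnitary).2
  have hU' := (Matrix.mem_unitaryGroup_iff').mp (hA.eigenvectorUnitary).2
  calc A.charpoly = (Matrix.diagonal (RCLike.ofReal ∘ hA.eigenvalues)).charpoly := by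
        conv_lhs => rw [h]
        exact charpoly_conj_aux _ _ _ hU hU'
    _ = ∏ i, (X - C (hA.eigenvalues i : ℂ)) := by
        rw [Matrix.charpoly, _root_.charmatrix_diagonal, det_diagonal]
        rfl

lemma charpoly_sparse (a b b' d e f : ℂ) :
    (!![a,0,0,b; 0,d,0,0; 0,0,e,0; b',0,0,f] : Matrix (Fin 4) (Fin 4) ℂ).charpoly
      = ((X - C a) * (X - C f) - C b * C b') * ((X - C d) * (X - C e)) := by
  rw [Matrix.charpoly]
  simp [Matrix.det_succ_row_zero, Fin.sum_univ_succ, charmatrix_apply, Matrix.diagonal_apply,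
    show Fin.succ 2 = (3:Fin 4) from rfl, show Fin.castSucc 2 = (2:Fin 4) from rfl,
    show Fin.succ 1 = (2:Fin 4) from rfl, show Fin.castSucc 1 = (1:Fin 4) from rfl,
    show Fin.succ 0 = (1:Fin 4) from rfl, show Fin.castSucc 0 = (0:Fin 4) from rfl,
    show Fin.succAbove 3 2 = (2:Fin 4) from rfl]
  ring

lemma Mmat_pi4 (q : Fin 4 → ℝ) (φ : ℝ) :
    Mmat q (Real.pi/4) φ =
      !![(q 0:ℂ), 0, 0, (((q 2 - q 1)/2 :ℝ):ℂ) * Complex.exp (Complex.I*φ);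
         0, (((q 1 + q 2)/2 :ℝ):ℂ), 0, 0;
         0, 0, (((q 1 + q 2)/2:ℝ):ℂ), 0;
         (((q 2 - q 1)/2:ℝ):ℂ) * Complex.exp (-(Complex.I*φ)), 0, 0, (q 3:ℂ)] := by
  unfold Mmat
  have h2 : 2 * (Real.pi/4) = Real.pi/2 := by ring
  rw [h2, Real.sin_pi_div_two]
  have hc : Real.cos (Real.pi/4) ^ 2 = 1/2 := by
    rw [Real.cos_pi_div_four]
    rw [div_pow, Real.sq_sqrt (by norm_num : (0:ℝ) ≤ 2)]
    norm_num
  have hs : Real.sin (Real.pi/4) ^ 2 = 1/2 := by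
    rw [Real.sin_pi_div_four]
    rw [div_pow, Real.sq_sqrt (by norm_num : (0:ℝ) ≤ 2)]
    norm_num
  rw [hc, hs]
  congr 2 <;> push_cast <;> ring

noncomputable def dvec (q : Fin 4 → ℝ) : Fin 4 → ℝ :=
  ![(q 0 + q 3 - Real.sqrt ((q 0 - q 3)^2 + (q 1 - q 2)^2))/2,
    (q 0 + q 3 + Real.sqrt ((q 0 - q 3)^2 + (q 1 - q 2)^2))/2,
    (q 1 + q 2)/2, (q 1 + q 2)/2]

open Polynomial in
lemma charpoly_Mmat (q : Fin 4 → ℝ) (φ : ℝ) :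
    (Mmat q (Real.pi/4) φ).charpoly = ∏ i, (X - C ((dvec q i : ℝ) : ℂ)) := by
  rw [Mmat_pi4, charpoly_sparse, Fin.prod_univ_four]
  simp only [dvec, Matrix.cons_val_zero, Matrix.cons_val_one, Matrix.head_cons,
    Matrix.cons_val_two, Matrix.tail_cons, Matrix.cons_val_three]
  have hE : Complex.exp (Complex.I*φ) * Complex.exp (-(Complex.I*φ)) = 1 := by
    rw [← Complex.exp_add]; simp
  have hs2 : ((Real.sqrt ((q 0 - q 3)^2 + (q 1 - q 2)^2) : ℝ) : ℂ)^2
      = ((q 0 :ℂ) - q 3)^2 + ((q 1:ℂ) - q 2)^2 := by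
    have h := Real.sq_sqrt (by positivity : (0:ℝ) ≤ (q 0 - q 3)^2 + (q 1 - q 2)^2)
    rw [← Complex.ofReal_pow, h]
    push_cast
    ring
  apply Polynomial.funext
  intro z
  simp only [eval_mul, eval_sub, eval_add, eval_X, eval_C, eval_pow]
  push_cast
  linear_combination (-(((q 2:ℂ) - q 1)/2)^2 * (z - ((q 1:ℂ) + q 2)/2)^2) * hE +
    ((z - ((q 1:ℂ) + q 2)/2)^2/4) * hs2

open Polynomial in
lemma eig_multiset (q : Fin 4 → ℝ) (φ : ℝ) (hM : (Mmat q (Real.pi/4) φ).IsHermitian) :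
    Finset.univ.val.map hM.eigenvalues = Finset.univ.val.map (dvec q) := by
  have key : ∀ f : Fin 4 → ℝ,
      (∏ i, (X - C ((f i : ℝ) : ℂ))).roots
        = Finset.univ.val.map (fun i => ((f i : ℝ) : ℂ)) := by
    intro f
    rw [Finset.prod_eq_multiset_prod]
    have := Polynomial.roots_multiset_prod_X_sub_C
      (Finset.univ.val.map fun i : Fin 4 => ((f i : ℝ) : ℂ))
    rw [Multiset.map_map] at this
    exact this
  have h2 := charpoly_Mmat q φ
  rw [herm_charpoly hM] at h2
  have h3 := congrArg Polynomial.roots h2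
  rw [key hM.eigenvalues, key (dvec q)] at h3
  apply Multiset.map_injective Complex.ofReal_injective
  rw [Multiset.map_map, Multiset.map_map]
  exact h3

lemma sum_g_eq (q : Fin 4 → ℝ) (φ : ℝ) (hM : (Mmat q (Real.pi/4) φ).IsHermitian) :
    (∑ i, max (-(hM.eigenvalues i)) 0) = ∑ i, max (-(dvec q i)) 0 := by
  have h := congrArg (fun m : Multiset ℝ => (m.map (fun x => max (-x) 0)).sum)
    (eig_multiset q φ hM)
  simpa [Multiset.map_map, Finset.sum] using h

/-- at θ = π/4 the negativity (the sum of absolute values of the negative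
eigenvalues of M(q, π/4, φ), with multiplicity) equals
max(0, ½[√((q₁−q₄)² + (q₂−q₃)²) − (q₁+q₄)]); moreover
(q₁−q₄)² + (q₂−q₃)² = (q₁+q₄)² − f(q), so the negativity also equals
max(0, ½[√((q₁+q₄)² − f(q)) − (q₁+q₄)]), and it is positive exactly when f(q) < 0. -/
theorem negativity_formula (q : Fin 4 → ℝ) (hq : inSimplex q) (φ : ℝ)
    (hM : (Mmat q (Real.pi / 4) φ).IsHermitian) :
    (∑ i, max (-(hM.eigenvalues i)) 0) =
      max 0 ((Real.sqrt ((q 0 - q 3) ^ 2 + (q 1 - q 2) ^ 2) - (q 0 + q 3)) / 2) ∧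
    (q 0 - q 3) ^ 2 + (q 1 - q 2) ^ 2 = (q 0 + q 3) ^ 2 - fwit q ∧
    (∑ i, max (-(hM.eigenvalues i)) 0) =
      max 0 ((Real.sqrt ((q 0 + q 3) ^ 2 - fwit q) - (q 0 + q 3)) / 2) ∧
    (0 < ∑ i, max (-(hM.eigenvalues i)) 0 ↔ fwit q < 0) := by

  obtain ⟨hq0, -⟩ := hq
  set s := Real.sqrt ((q 0 - q 3) ^ 2 + (q 1 - q 2) ^ 2) with hsdef
  have hsnn : 0 ≤ s := Real.sqrt_nonneg _
  have ht : 0 ≤ q 0 + q 3 := by have := hq0 0; have := hq0 3; linarith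
  have ha : 0 ≤ (q 1 + q 2) / 2 := by have := hq0 1; have := hq0 2; linarith
  have hsum : (∑ i, max (-(hM.eigenvalues i)) 0)
      = max 0 ((s - (q 0 + q 3)) / 2) := by
    rw [sum_g_eq q φ hM, Fin.sum_univ_four]
    simp only [dvec, Matrix.cons_val_zero, Matrix.cons_val_one, Matrix.head_cons,
      Matrix.cons_val_two, Matrix.tail_cons, Matrix.cons_val_three, ← hsdef]
    rw [max_eq_right (by linarith : -((q 0 + q 3 + s) / 2) ≤ 0),
      max_eq_right (by linarith : -((q 1 + q 2) / 2) ≤ 0)]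
    rw [add_zero, add_zero, add_zero, max_comm]
    congr 1
    ring
  have hfw : (q 0 - q 3) ^ 2 + (q 1 - q 2) ^ 2 = (q 0 + q 3) ^ 2 - fwit q := by
    unfold fwit; ring
  refine ⟨hsum, hfw, ?_, ?_⟩
  · rw [hsum, ← hfw, ← hsdef]
  · rw [hsum]
    have hmax : (0 < max 0 ((s - (q 0 + q 3)) / 2)) ↔ 0 < (s - (q 0 + q 3)) / 2 := by
      simp [lt_max_iff]
    rw [hmax]
    constructor
    · intro h
      have hlt : q 0 + q 3 < s := by linarith
      have := (Real.lt_sqrt ht).mp hlt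
      linarith [hfw]
    · intro h
      have hlt : (q 0 + q 3) ^ 2 < (q 0 - q 3) ^ 2 + (q 1 - q 2) ^ 2 := by
        rw [hfw]; linarith
      have := (Real.lt_sqrt ht).mpr hlt
      linarith
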